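/- Let a be the minimum letter of a totally ordered alphabet A, and x a finite singular word over A with at least two occurrences of a. Then a is separating for x (occurs in every length-2 factor) if and only if |x|_a ≥ (sum over a' ≠ a of |x|_{a'}) + 1; moreover aa is a factor of x if and only if this inequality is strict. -/

import Mathlib

/-- Lexicographic order on finite words with the convention that
`u < v` whenever `v` is a proper prefix of `u`. -/
def Wlt {A : Type*} [LinearOrder A] : List A → List A → Prop
  | [], _ => False
  | _ :: _, [] => True
  | a :: u, b :: v => a < b ∨ (a = b ∧ Wlt u v)

/-- A finite word is singular if every factorization `x = reverse u ++ v ++ w`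
with `v` nonempty, `v ≠ reverse v`, `u ≠ w` satisfies `v < v̄ ↔ w < u`. -/
def Singular {A : Type*} [LinearOrder A] (x : List A) : Prop :=
  ∀ u v w : List A, x = u.reverse ++ v ++ w → v ≠ [] → v ≠ v.reverse → u ≠ w →
    (Wlt v v.reverse ↔ Wlt w u)

section Aux

variable {A : Type*} [LinearOrder A]

lemma wlt_asymm : ∀ u v : List A, Wlt u v → Wlt v u → False
  | [], _, h, _ => h.elim
  | _ :: _, [], _, h => h.elim
  | a :: u, b :: v, h1, h2 => by
    rcases h1 with h1 | ⟨rfl, h1⟩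
    · rcases h2 with h2 | ⟨rfl, h2⟩
      · exact absurd h2 (not_lt.mpr h1.le)
      · exact absurd h1 (lt_irrefl _)
    · rcases h2 with h2 | ⟨-, h2⟩
      · exact absurd h2 (lt_irrefl _)
      · exact wlt_asymm u v h1 h2

lemma wlt_total : ∀ u v : List A, u = v ∨ Wlt u v ∨ Wlt v u
  | [], [] => Or.inl rfl
  | [], _ :: _ => Or.inr (Or.inr trivial)
  | _ :: _, [] => Or.inr (Or.inl trivial)
  | a :: u, b :: v => by
    rcases lt_trichotomy a b with h | rfl | h
    · exact Or.inr (Or.inl (Or.inl h))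
    · rcases wlt_total u v with rfl | h | h
      · exact Or.inl rfl
      · exact Or.inr (Or.inl (Or.inr ⟨rfl, h⟩))
      · exact Or.inr (Or.inr (Or.inr ⟨rfl, h⟩))
    · exact Or.inr (Or.inr (Or.inl h))

lemma singular_reverse {x : List A} (h : Singular x) : Singular x.reverse := by
  intro u v w hx hv hvv huw
  have hx' : x = w.reverse ++ v.reverse ++ u := by
    have := congrArg List.reverse hx
    simpa [List.reverse_append, List.append_assoc] using this
  have h2 := h w v.reverse u hx' (by simpa using hv)
    (by simpa using hvv.symm) (Ne.symm huw)
  rw [List.reverse_reverse] at h2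
  constructor
  · intro h3
    have hnuw : ¬ Wlt u w := fun hc => wlt_asymm _ _ (h2.mpr hc) h3
    rcases wlt_total w u with rfl | h4 | h4
    · exact absurd rfl huw
    · exact h4
    · exact absurd h4 hnuw
  · intro h3
    have hnuw : ¬ Wlt u w := fun hc => wlt_asymm _ _ h3 hc
    have hnvv : ¬ Wlt v.reverse v := fun hc => hnuw (h2.mp hc)
    rcases wlt_total v v.reverse with h4 | h4 | h4
    · exact absurd h4 hvv
    · exact h4
    · exact absurd h4 hnvv

lemma exists_first (a : A) : ∀ x : List A, a ∈ x →
    ∃ B R, x = B ++ a :: R ∧ ∀ b ∈ B, b ≠ a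
  | c :: t, h => by
    by_cases hc : c = a
    · exact ⟨[], t, by simp [hc], by simp⟩
    · have ht : a ∈ t := by
        rcases List.mem_cons.mp h with h | h
        · exact absurd h.symm hc
        · exact h
      obtain ⟨B, R, h1, h2⟩ := exists_first a t ht
      refine ⟨c :: B, R, by simp [h1], ?_⟩
      intro b hb
      rcases List.mem_cons.mp hb with rfl | hb
      · exact hc
      · exact h2 b hb

lemma starts_with_a (a : A) (ha : ∀ e : A, a ≤ e) {x : List A} (hs : Singular x)
    (hc : 2 ≤ x.count a) : ∃ z, x = a :: z := by
  have hmem : a ∈ x := List.count_pos_iff.mp (by omega)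
  obtain ⟨B, R, hx, hB⟩ := exists_first a x hmem
  rcases B with _ | ⟨b, B'⟩
  · exact ⟨R, by simpa using hx⟩
  · exfalso
    have hb : b ≠ a := hB b (by simp)
    have hB0 : (b :: B').count a = 0 := by
      rw [List.count_eq_zero]
      intro hmem'
      exact hB a hmem' rfl
    have hcR : 1 ≤ R.count a := by
      have hsplit : x.count a = (b :: B').count a + (a :: R).count a := by
        rw [hx]; rw [List.count_append]
      rw [hB0] at hsplit
      simp [List.count_cons] at hsplit
      omega
    obtain ⟨r, R', rfl⟩ : ∃ r R', R = r :: R' := by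
      rcases R with _ | ⟨r, R'⟩
      · simp at hcR
      · exact ⟨r, R', rfl⟩
    have hx' : x = ([] : List A).reverse ++ (b :: (B' ++ [a])) ++ (r :: R') := by
      rw [hx]; simp
    have hrev : (b :: (B' ++ [a])).reverse = a :: (B'.reverse ++ [b]) := by simp
    have hvv : (b :: (B' ++ [a])) ≠ (b :: (B' ++ [a])).reverse := by
      rw [hrev]
      intro h
      exact hb (List.cons.inj h).1
    have huw : ([] : List A) ≠ r :: R' := by simp
    have key := hs [] (b :: (B' ++ [a])) (r :: R') hx' (by simp) hvv huw
    have hwu : Wlt (r :: R') ([] : List A) := trivial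
    have hvlt := key.mpr hwu
    rw [hrev] at hvlt
    rcases hvlt with h | ⟨h, -⟩
    · exact absurd h (not_lt.mpr (ha b))
    · exact hb h

lemma ends_with_a (a : A) (ha : ∀ e : A, a ≤ e) {x : List A} (hs : Singular x)
    (hc : 2 ≤ x.count a) : ∃ y, x = y ++ [a] := by
  obtain ⟨z, hz⟩ := starts_with_a a ha (singular_reverse hs) (by simpa using hc)
  refine ⟨z.reverse, ?_⟩
  rw [← List.reverse_reverse x, hz]
  simp

lemma aa_pair_incompat (a : A) (ha : ∀ e : A, a ≤ e) {x : List A} (hs : Singular x)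
    {p q r s : List A} {b c : A} (hb : b ≠ a) (hc : c ≠ a)
    (h1 : x = p ++ [a, a] ++ q) (h2 : x = r ++ [b, c] ++ s) : False := by
  have heq : p ++ ([a, a] ++ q) = r ++ ([b, c] ++ s) := by
    rw [← List.append_assoc, ← List.append_assoc, ← h1, ← h2]
  rcases List.append_eq_append_iff.mp heq with ⟨m, hm1, hm2⟩ | ⟨m, hm1, hm2⟩
  · -- r = p ++ m, [a,a] ++ q = m ++ ([b,c] ++ s)
    rcases m with _ | ⟨m0, m⟩
    · simp at hm2
      exact hb hm2.1.symm
    rcases m with _ | ⟨m1, m⟩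
    · simp at hm2
      obtain ⟨rfl, h⟩ := hm2
      exact hb h.1.symm
    · have hm0 : m0 = a := ((List.cons.inj hm2).1).symm
      have hrest := (List.cons.inj hm2).2
      have hm1' : m1 = a := ((List.cons.inj hrest).1).symm
      have hq : q = m ++ ([b, c] ++ s) := (List.cons.inj hrest).2
      -- x = p ++ [a,a] ++ m ++ [b,c] ++ s
      have hx' : x = ((p ++ [a]).reverse).reverse ++ (a :: (m ++ [b])) ++ (c :: s) := by
        rw [List.reverse_reverse, h1, hq]; simp
      have hrev : (a :: (m ++ [b])).reverse = b :: (m.reverse ++ [a]) := by simp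
      have hvv : (a :: (m ++ [b])) ≠ (a :: (m ++ [b])).reverse := by
        rw [hrev]; intro h; exact hb ((List.cons.inj h).1).symm
      have huw : (p ++ [a]).reverse ≠ c :: s := by
        rw [List.reverse_append]
        intro h
        exact hc ((List.cons.inj h).1).symm
      have key := hs ((p ++ [a]).reverse) (a :: (m ++ [b])) (c :: s) hx'
        (by simp) hvv huw
      have hvlt : Wlt (a :: (m ++ [b])) ((a :: (m ++ [b])).reverse) := by
        rw [hrev]
        exact Or.inl ((ha b).lt_of_ne (Ne.symm hb))
      have hwu := key.mp hvlt
      rw [List.reverse_append] at hwu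
      rcases hwu with h | ⟨h, -⟩
      · exact absurd h (not_lt.mpr (ha c))
      · exact hc h
  · -- p = r ++ m, [b,c] ++ s = m ++ ([a,a] ++ q)
    rcases m with _ | ⟨m0, m⟩
    · simp at hm2
      exact hb hm2.1
    rcases m with _ | ⟨m1, m⟩
    · simp at hm2
      obtain ⟨rfl, h⟩ := hm2
      exact hc h.1
    · have hm0 : b = m0 := (List.cons.inj hm2).1
      have hrest := (List.cons.inj hm2).2
      have hm1' : c = m1 := (List.cons.inj hrest).1
      have hsq : s = m ++ ([a, a] ++ q) := (List.cons.inj hrest).2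
      -- x = r ++ [b,c] ++ m ++ [a,a] ++ q
      have hx' : x = ((r ++ [b]).reverse).reverse ++ (c :: (m ++ [a])) ++ (a :: q) := by
        rw [List.reverse_reverse, h2, hsq]; simp
      have hrev : (c :: (m ++ [a])).reverse = a :: (m.reverse ++ [c]) := by simp
      have hvv : (c :: (m ++ [a])) ≠ (c :: (m ++ [a])).reverse := by
        rw [hrev]; intro h; exact hc (List.cons.inj h).1
      have huw : (r ++ [b]).reverse ≠ a :: q := by
        rw [List.reverse_append]
        intro h
        exact hb (List.cons.inj h).1
      have key := hs ((r ++ [b]).reverse) (c :: (m ++ [a])) (a :: q) hx'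
        (by simp) hvv huw
      have hwu : Wlt (a :: q) ((r ++ [b]).reverse) := by
        rw [List.reverse_append]
        exact Or.inl ((ha b).lt_of_ne (Ne.symm hb))
      have hvlt := key.mpr hwu
      rw [hrev] at hvlt
      rcases hvlt with h | ⟨h, -⟩
      · exact absurd h (not_lt.mpr (ha c))
      · exact hc h

/-- Counting for words with no adjacent pair of non-`a` letters, ending in `a`. -/
lemma count_noPair (a : A) : ∀ x : List A,
    (∀ p (b c : A) q, x = p ++ [b, c] ++ q → b = a ∨ c = a) →
    ∀ y : List A, x = y ++ [a] →
    (x.length ≤ 2 * x.count a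
      ∧ (∀ z, x = a :: z → x.length + 1 ≤ 2 * x.count a)
      ∧ (∀ z, x = a :: z → (∃ p q, x = p ++ [a, a] ++ q) → x.length + 2 ≤ 2 * x.count a)
      ∧ (∀ e z, x = e :: z → e ≠ a → (∃ p q, x = p ++ [a, a] ++ q) →
          x.length + 1 ≤ 2 * x.count a)) := by
  intro x
  induction x with
  | nil =>
    intro _ y hy
    exfalso
    rcases y with _ | ⟨y0, y'⟩ <;> simp at hy
  | cons c t ih =>
    intro hNP y hy
    rcases y with _ | ⟨y0, y'⟩
    · -- x = [a]
      simp at hy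
      obtain ⟨rfl, rfl⟩ := hy
      refine ⟨by simp, by simp, ?_, ?_⟩
      · rintro z hz ⟨p, q, hpq⟩
        exfalso
        have := congrArg List.length hpq
        simp at this
        omega
      · intro e z hz he _
        exfalso
        exact he (List.cons.inj hz).1.symm
    · have hct : c = y0 ∧ t = y' ++ [a] := by
        constructor
        · exact (List.cons.inj hy).1
        · exact (List.cons.inj hy).2
      obtain ⟨-, hty⟩ := hct
      obtain ⟨d, t', rfl⟩ : ∃ d t', t = d :: t' := by
        rcases t with _ | ⟨d, t'⟩
        · exfalso; rcases y' with _ | _ <;> simp at hty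
        · exact ⟨d, t', rfl⟩
      have hNPt : ∀ p (b c' : A) q, (d :: t') = p ++ [b, c'] ++ q → b = a ∨ c' = a := by
        intro p b c' q hpq
        exact hNP (c :: p) b c' q (by rw [hpq]; simp)
      obtain ⟨I1, I2, I3, I4⟩ := ih hNPt y' hty
      have hlen : (c :: d :: t').length = (d :: t').length + 1 := by simp
      constructor
      · -- (i)
        by_cases hca : c = a
        · subst hca
          have : ((c :: d :: t').count c) = (d :: t').count c + 1 := by
            simp [List.count_cons]
          rw [this]
          omega
        · have hd : d = a := by
            rcases hNP [] c d t' (by simp) with h | h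
            · exact absurd h hca
            · exact h
          have hcnt : ((c :: d :: t').count a) = (d :: t').count a := by
            simp [List.count_cons, Ne.symm hca, hca]
          have := I2 t' (by rw [hd])
          rw [hcnt]
          omega
      refine ⟨?_, ?_, ?_⟩
      · -- (ii)
        intro z hz
        have hca : c = a := (List.cons.inj hz).1
        subst hca
        have hcnt : ((c :: d :: t').count c) = (d :: t').count c + 1 := by
          simp [List.count_cons]
        rw [hcnt]
        omega
      · -- (iii)
        rintro z hz ⟨p, q, hpq⟩
        have hca : c = a := (List.cons.inj hz).1
        subst hca
        have hcnt : ((c :: d :: t').count c) = (d :: t').count c + 1 := by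
          simp [List.count_cons]
        rw [hcnt]
        by_cases hd : d = c
        · have := I2 t' (by rw [hd])
          omega
        · -- aa occurs in t
          rcases p with _ | ⟨p0, p'⟩
          · exfalso
            simp at hpq
            exact hd hpq.1
          · have ht : d :: t' = p' ++ [c, c] ++ q := (List.cons.inj hpq).2
            have := I4 d t' rfl hd ⟨p', q, ht⟩
            omega
      · -- (iv)
        rintro e z hz he ⟨p, q, hpq⟩
        have hce : c = e := (List.cons.inj hz).1
        have hca : c ≠ a := by rw [hce]; exact he
        have hd : d = a := by
          rcases hNP [] c d t' (by simp) with h | h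
          · exact absurd h hca
          · exact h
        have hcnt : ((c :: d :: t').count a) = (d :: t').count a := by
          simp [List.count_cons, Ne.symm hca, hca]
        rw [hcnt]
        rcases p with _ | ⟨p0, p'⟩
        · exfalso
          have : c = a := by
            simpa using (List.cons.inj hpq).1
          exact hca this
        · have ht : d :: t' = p' ++ [a, a] ++ q := (List.cons.inj hpq).2
          have := I3 t' (by rw [hd]) ⟨p', q, ht⟩
          omega

/-- Counting for words with no `aa` factor, ending in `a`. -/
lemma count_noAA (a : A) : ∀ x : List A,
    (∀ p q, x = p ++ [a, a] ++ q → False) →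
    ∀ y : List A, x = y ++ [a] →
    (2 * x.count a ≤ x.length + 1
      ∧ (∀ e z, x = e :: z → e ≠ a → 2 * x.count a ≤ x.length)
      ∧ ((∃ p b c q, b ≠ a ∧ c ≠ a ∧ x = p ++ [b, c] ++ q) →
          2 * x.count a ≤ x.length)
      ∧ (∀ e z, x = e :: z → e ≠ a →
          (∃ p b c q, b ≠ a ∧ c ≠ a ∧ x = p ++ [b, c] ++ q) →
          2 * x.count a + 1 ≤ x.length)) := by
  intro x
  induction x with
  | nil =>
    intro _ y hy
    exfalso
    rcases y with _ | ⟨y0, y'⟩ <;> simp at hy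
  | cons c t ih =>
    intro hNA y hy
    rcases y with _ | ⟨y0, y'⟩
    · simp only [List.nil_append] at hy
      rw [hy]
      have hnopair : ¬ (∃ p b c' q, b ≠ a ∧ c' ≠ a ∧ ([a] : List A) = p ++ [b, c'] ++ q) := by
        rintro ⟨p, b, c', q, -, -, hpq⟩
        have := congrArg List.length hpq
        simp at this
        omega
      refine ⟨by simp, ?_, fun h => absurd h hnopair, fun _ _ _ _ h => absurd h hnopair⟩
      intro e z hz he
      exact absurd (List.cons.inj hz).1.symm he
    · have hty : t = y' ++ [a] := (List.cons.inj hy).2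
      obtain ⟨d, t', rfl⟩ : ∃ d t', t = d :: t' := by
        rcases t with _ | ⟨d, t'⟩
        · exfalso; rcases y' with _ | _ <;> simp at hty
        · exact ⟨d, t', rfl⟩
      have hNAt : ∀ p q, (d :: t') = p ++ [a, a] ++ q → False := by
        intro p q hpq
        exact hNA (c :: p) q (by rw [hpq]; simp)
      obtain ⟨I1, I2, I3, I4⟩ := ih hNAt y' hty
      have hlen : (c :: d :: t').length = (d :: t').length + 1 := by simp
      have main1 : 2 * (c :: d :: t').count a ≤ (c :: d :: t').length + 1 := by
        by_cases hca : c = a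
        · subst hca
          have hd : d ≠ c := by
            intro hd
            exact hNA [] t' (by rw [hd]; simp)
          have hcnt : ((c :: d :: t').count c) = (d :: t').count c + 1 := by
            simp [List.count_cons]
          have := I2 d t' rfl hd
          rw [hcnt]
          omega
        · have hcnt : ((c :: d :: t').count a) = (d :: t').count a := by
            simp [List.count_cons, Ne.symm hca, hca]
          rw [hcnt]
          omega
      have main2 : ∀ e z, (c :: d :: t') = e :: z → e ≠ a →
          2 * (c :: d :: t').count a ≤ (c :: d :: t').length := by
        intro e z hz he
        have hca : c ≠ a := by
          have : c = e := (List.cons.inj hz).1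
          rw [this]; exact he
        have hcnt : ((c :: d :: t').count a) = (d :: t').count a := by
          simp [List.count_cons, Ne.symm hca, hca]
        rw [hcnt]
        omega
      have main3 : (∃ p b c' q, b ≠ a ∧ c' ≠ a ∧
          (c :: d :: t') = p ++ [b, c'] ++ q) → 2 * (c :: d :: t').count a ≤ (c :: d :: t').length := by
        rintro ⟨p, b, c', q, hb, hc', hpq⟩
        rcases p with _ | ⟨p0, p'⟩
        · have hcb : c = b := (List.cons.inj hpq).1
          exact main2 c (d :: t') rfl (by rw [hcb]; exact hb)
        · have ht : d :: t' = p' ++ [b, c'] ++ q := (List.cons.inj hpq).2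
          by_cases hca : c = a
          · subst hca
            have hd : d ≠ c := by
              intro hd
              exact hNA [] t' (by rw [hd]; simp)
            have hcnt : ((c :: d :: t').count c) = (d :: t').count c + 1 := by
              simp [List.count_cons]
            have := I4 d t' rfl hd ⟨p', b, c', q, hb, hc', ht⟩
            rw [hcnt]
            omega
          · have hcnt : ((c :: d :: t').count a) = (d :: t').count a := by
              simp [List.count_cons, Ne.symm hca, hca]
            rw [hcnt]
            omega
      refine ⟨main1, main2, main3, ?_⟩
      rintro e z hz he ⟨p, b, c', q, hb, hc', hpq⟩
      have hca : c ≠ a := by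
        have : c = e := (List.cons.inj hz).1
        rw [this]; exact he
      have hcnt : ((c :: d :: t').count a) = (d :: t').count a := by
        simp [List.count_cons, Ne.symm hca, hca]
      rw [hcnt]
      rcases p with _ | ⟨p0, p'⟩
      · -- pair at the front : d = c' ≠ a
        have hd : d = c' := by
          have := (List.cons.inj hpq).2
          exact (List.cons.inj this).1
        have hd' : d ≠ a := by rw [hd]; exact hc'
        have := I2 d t' rfl hd'
        omega
      · have ht : d :: t' = p' ++ [b, c'] ++ q := (List.cons.inj hpq).2
        have := I3 ⟨p', b, c', q, hb, hc', ht⟩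
        omega

end Aux

theorem singular_min_separating_iff {A : Type*} [LinearOrder A] (a : A)
    (ha : ∀ e : A, a ≤ e) (x : List A) (hsing : Singular x) (hcount : 2 ≤ x.count a) :
    ((∀ u : List A, u <:+: x → u.length = 2 → a ∈ u) ↔
      (x.length - x.count a) + 1 ≤ x.count a) ∧
    ([a, a] <:+: x ↔ (x.length - x.count a) + 1 < x.count a) := by
  obtain ⟨z, hz⟩ := starts_with_a a ha hsing hcount
  obtain ⟨y, hy⟩ := ends_with_a a ha hsing hcount
  have hm : x.count a ≤ x.length := List.count_le_length
  constructor
  · constructor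
    · intro hsep
      have hNP : ∀ p (b c : A) q, x = p ++ [b, c] ++ q → b = a ∨ c = a := by
        intro p b c q hpq
        have hin : [b, c] <:+: x := ⟨p, q, hpq.symm⟩
        have hmem := hsep [b, c] hin rfl
        simp at hmem
        tauto
      have H := (count_noPair a x hNP y hy).2.1 z hz
      omega
    · intro hle u hu hu2
      by_contra hnotin
      obtain ⟨b, c, rfl⟩ : ∃ b c, u = [b, c] := by
        rcases u with _ | ⟨b, u⟩
        · simp at hu2
        rcases u with _ | ⟨c, u⟩
        · simp at hu2
        rcases u with _ | ⟨e, u⟩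
        · exact ⟨b, c, rfl⟩
        · simp at hu2
      simp at hnotin
      push_neg at hnotin
      have hb : b ≠ a := Ne.symm hnotin.1
      have hc : c ≠ a := Ne.symm hnotin.2
      obtain ⟨p, q, hpq⟩ := hu
      have hNA : ∀ p' q', x = p' ++ [a, a] ++ q' → False := fun p' q' h' =>
        aa_pair_incompat a ha hsing hb hc h' hpq.symm
      have H := (count_noAA a x hNA y hy).2.2.1 ⟨p, b, c, q, hb, hc, hpq.symm⟩
      omega
  · constructor
    · rintro ⟨p, q, hpq⟩
      have hNP : ∀ p' (b c : A) q', x = p' ++ [b, c] ++ q' → b = a ∨ c = a := by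
        intro p' b c q' h'
        by_contra hcon
        push_neg at hcon
        exact aa_pair_incompat a ha hsing hcon.1 hcon.2 hpq.symm h'
      have H := (count_noPair a x hNP y hy).2.2.1 z hz ⟨p, q, hpq.symm⟩
      omega
    · intro hlt
      by_contra hnin
      have hNA : ∀ p q, x = p ++ [a, a] ++ q → False := fun p q h' =>
        hnin ⟨p, q, h'.symm⟩
      have H := (count_noAA a x hNA y hy).1
      omega
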